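/- Let q be a prime power, m ≥ 1, and f ∈ F_q[x_1,...,x_m] a nonzero polynomial of total degree ≤ l with l ≤ q - 1 and degree ≤ q - 1 in each variable. Write (q-1)m - l = θ(q-1) + μ with 0 ≤ μ < q - 1. Then f has at most q^m - (μ+1)q^θ zeros in F_q^m. -/

import Mathlib

open MvPolynomial

section Helpers
open Finset Polynomial
variable {F : Type*} [Field F] [Fintype F] [DecidableEq F]

lemma card_root_filter_le (p : Polynomial F) (hp : p ≠ 0) :
    (Finset.univ.filter fun y : F => p.eval y = 0).card ≤ p.natDegree := by
  calc (Finset.univ.filter fun y : F => p.eval y = 0).card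
      ≤ p.roots.toFinset.card := by
        apply Finset.card_le_card
        intro y hy
        simp only [Finset.mem_filter] at hy
        simp [Multiset.mem_toFinset, Polynomial.mem_roots hp, hy.2, Polynomial.IsRoot]
    _ ≤ Multiset.card p.roots := Multiset.toFinset_card_le _
    _ ≤ p.natDegree := Polynomial.card_roots' p

lemma schwartz_zippel : ∀ (m : ℕ) (f : MvPolynomial (Fin m) F), f ≠ 0 →
    (Finset.univ.filter fun x : Fin m → F => eval x f = 0).card * Fintype.card F
      ≤ f.totalDegree * (Fintype.card F) ^ m := by
  intro m
  induction m with
  | zero =>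
    intro f hf
    have he : (Finset.univ.filter fun x : Fin 0 → F => eval x f = 0) = ∅ := by
      apply Finset.eq_empty_of_forall_notMem
      intro x hx
      simp only [Finset.mem_filter] at hx
      have hc : f = MvPolynomial.C (constantCoeff f) := eq_C_of_isEmpty f
      have hcne : constantCoeff f ≠ 0 := by
        intro h; apply hf; rw [hc, h, map_zero]
      apply hcne
      have := hx.2
      rw [hc] at this
      simpa using this
    rw [he]
    simp
  | succ m ih =>
    intro f hf
    set q := Fintype.card F with hq
    set P := finSuccEquiv F m f with hP
    have hPne : P ≠ 0 := by
      intro h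
      exact hf ((finSuccEquiv F m).injective (by rw [map_zero]; exact h))
    set d := P.natDegree with hd
    set g := P.coeff d with hg
    have hgne : g ≠ 0 := Polynomial.leadingCoeff_ne_zero.mpr hPne
    have hdeg : g.totalDegree + d ≤ f.totalDegree :=
      totalDegree_coeff_finSuccEquiv_add_le f d (by exact hgne)
    have key : (Finset.univ.filter fun x : Fin (m+1) → F => eval x f = 0).card
        ≤ ∑ s : Fin m → F, (if eval s g = 0 then q else d) := by
      have hcount : (Finset.univ.filter fun x : Fin (m+1) → F => eval x f = 0).card
          = ∑ s : Fin m → F, (Finset.univ.filter fun y : F =>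
              eval (Fin.cons y s : Fin (m+1) → F) f = 0).card := by
        rw [Finset.card_filter]
        have := Fintype.sum_equiv (Fin.consEquiv fun _ : Fin (m+1) => F)
          (fun p : F × (Fin m → F) =>
            if eval (Fin.cons p.1 p.2 : Fin (m+1) → F) f = 0 then 1 else 0)
          (fun x : Fin (m+1) → F => if eval x f = 0 then 1 else 0)
          (fun p => rfl)
        rw [← this, Fintype.sum_prod_type_right]
        simp only [Finset.card_filter]
      rw [hcount]
      apply Finset.sum_le_sum
      intro s _
      by_cases hs : eval s g = 0
      · simp only [hs, if_true]
        calc _ ≤ (Finset.univ : Finset F).card := Finset.card_filter_le _ _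
          _ = q := by simp [hq]
      · simp only [hs, if_false]
        have hmapne : P.map (eval s) ≠ 0 := by
          intro h
          apply hs
          have := congrArg (fun p => Polynomial.coeff p d) h
          simpa [Polynomial.coeff_map] using this
        calc (Finset.univ.filter fun y : F => eval (Fin.cons y s : Fin (m+1) → F) f = 0).card
            = (Finset.univ.filter fun y : F => (P.map (eval s)).eval y = 0).card := by
              congr 1; ext y; simp [eval_eq_eval_mv_eval', hP]
          _ ≤ (P.map (eval s)).natDegree := card_root_filter_le _ hmapne
          _ ≤ d := Polynomial.natDegree_map_le
    have hZg := ih g hgne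
    have hsum : ∑ s : Fin m → F, (if eval s g = 0 then q else d)
        ≤ g.totalDegree * q ^ m + q ^ m * d := by
      rw [Finset.sum_ite, Finset.sum_const, Finset.sum_const, smul_eq_mul, smul_eq_mul]
      have hcard : (Finset.univ.filter fun s : Fin m → F => ¬eval s g = 0).card ≤ q ^ m := by
        calc (Finset.univ.filter fun s : Fin m → F => ¬eval s g = 0).card
            ≤ (Finset.univ : Finset (Fin m → F)).card := Finset.card_filter_le _ _
          _ = q ^ m := by simp [hq, Fintype.card_fun]
      exact Nat.add_le_add hZg (Nat.mul_le_mul_right d hcard)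
    have hmain : (Finset.univ.filter fun x : Fin (m+1) → F => eval x f = 0).card
        ≤ f.totalDegree * q ^ m := by
      calc _ ≤ _ := key
        _ ≤ g.totalDegree * q ^ m + q ^ m * d := hsum
        _ = (g.totalDegree + d) * q ^ m := by ring
        _ ≤ f.totalDegree * q ^ m := Nat.mul_le_mul_right _ hdeg
    calc (Finset.univ.filter fun x : Fin (m+1) → F => eval x f = 0).card * q
        ≤ f.totalDegree * q ^ m * q := Nat.mul_le_mul_right _ hmain
      _ = f.totalDegree * q ^ (m+1) := by ring

lemma my_eq_C {m : ℕ} (f : MvPolynomial (Fin m) F) (h : f.totalDegree = 0) :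
    f = MvPolynomial.C (coeff 0 f) := by
  ext d
  rw [MvPolynomial.coeff_C]
  by_cases hd : d = 0
  · subst hd; simp
  · rw [if_neg (fun h' => hd h'.symm)]
    by_contra hne
    have hd' : d ∈ f.support := MvPolynomial.mem_support_iff.mpr hne
    have hz := (totalDegree_eq_zero_iff _ f).mp h d hd'
    exact hne (by exact absurd (Finsupp.ext fun x => hz x) hd)

end Helpers

/-- The Reed–Muller minimum-distance bound: a nonzero reduced polynomial of total
degree `≤ l ≤ q-1` in `m` variables has at most `q^m - (μ+1)q^θ` zeros in `F_q^m`,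
where `(q-1)m - l = θ(q-1) + μ` with `0 ≤ μ < q-1`. -/
theorem reed_muller_zero_bound
    (F : Type*) [Field F] [Fintype F]
    (q m l θ μ : ℕ) (hq : q = Fintype.card F)
    (hm : 1 ≤ m) (hl : l ≤ q - 1) (hμ : μ < q - 1)
    (hdecomp : (q - 1) * m - l = θ * (q - 1) + μ)
    (f : MvPolynomial (Fin m) F) (hf : f ≠ 0)
    (hdeg : f.totalDegree ≤ l)
    (hred : ∀ i : Fin m, f.degreeOf i ≤ q - 1) :
    Nat.card {x : Fin m → F // eval x f = 0} ≤ q ^ m - (μ + 1) * q ^ θ := by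
  classical
  have hq2 : 2 ≤ q := by rw [hq]; exact Fintype.one_lt_card
  have hq1 : 0 < q - 1 := by omega
  have hcard : Nat.card {x : Fin m → F // eval x f = 0}
      = (Finset.univ.filter fun x : Fin m → F => eval x f = 0).card := by
    rw [Nat.card_eq_fintype_card, Fintype.card_subtype]
  obtain ⟨m', rfl⟩ : ∃ m', m = m' + 1 := ⟨m - 1, by omega⟩
  -- rewrite hdecomp LHS
  have hlhs : (q - 1) * (m' + 1) - l = (q - 1) * m' + (q - 1 - l) := by
    have : (q - 1) * (m' + 1) = (q - 1) * m' + (q - 1) := by ring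
    omega
  rw [hlhs] at hdecomp
  -- Euclidean uniqueness
  rcases Nat.eq_zero_or_pos l with hl0 | hlpos
  · -- l = 0 : θ = m'+1, μ = 0, bound 0
    subst hl0
    have hd' : (q - 1) * (m' + 1) = (q - 1) * θ + μ := by
      have : (q - 1) * m' + (q - 1 - 0) = (q - 1) * m' + (q - 1) := by omega
      rw [this, (by ring : (q - 1) * m' + (q - 1) = (q - 1) * (m' + 1))] at hdecomp
      rw [hdecomp]; ring
    have hμ0 : μ = 0 := by
      have := congrArg (· % (q - 1)) hd'
      simpa [Nat.mul_add_mod, Nat.mul_mod_right, Nat.mod_eq_of_lt hμ] using this.symm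
    have hθ : θ = m' + 1 := by
      subst hμ0
      have := congrArg (· / (q - 1)) hd'
      simpa [Nat.mul_add_div hq1, Nat.mul_div_cancel_left _ hq1] using this.symm
    subst hμ0 hθ
    -- zero set empty
    have hd0 : f.totalDegree = 0 := Nat.le_zero.mp hdeg
    have hC : f = MvPolynomial.C (coeff 0 f) := my_eq_C f hd0
    have hc0 : coeff 0 f ≠ 0 := by
      intro h; apply hf; rw [hC, h, map_zero]
    have : Nat.card {x : Fin (m'+1) → F // eval x f = 0} = 0 := by
      rw [hcard, Finset.card_eq_zero]
      apply Finset.eq_empty_of_forall_notMem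
      intro x hx
      simp only [Finset.mem_filter] at hx
      apply hc0
      have := hx.2
      rw [hC] at this; simpa using this
    omega
  · -- l ≥ 1 : θ = m', μ = q-1-l
    have hd' : (q - 1) * m' + (q - 1 - l) = (q - 1) * θ + μ := by
      rw [hdecomp]; ring
    have hrl : q - 1 - l < q - 1 := by omega
    have hμ' : μ = q - 1 - l := by
      have := congrArg (· % (q - 1)) hd'
      simpa [Nat.mul_add_mod, Nat.mod_eq_of_lt hμ, Nat.mod_eq_of_lt hrl] using this.symm
    have hθ : θ = m' := by
      have := congrArg (· / (q - 1)) hd'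
      simpa [Nat.mul_add_div hq1, Nat.div_eq_of_lt hμ, Nat.div_eq_of_lt hrl] using this.symm
    -- bound via Schwartz-Zippel
    have hsz := schwartz_zippel (m' + 1) f hf
    rw [← hq] at hsz
    have hZ : (Finset.univ.filter fun x : Fin (m'+1) → F => eval x f = 0).card ≤ l * q ^ m' := by
      have h1 : (Finset.univ.filter fun x : Fin (m'+1) → F => eval x f = 0).card * q
          ≤ l * q ^ m' * q := by
        calc _ ≤ f.totalDegree * q ^ (m' + 1) := hsz
          _ ≤ l * q ^ (m' + 1) := Nat.mul_le_mul_right _ hdeg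
          _ = l * q ^ m' * q := by ring
      exact Nat.le_of_mul_le_mul_right h1 (by omega)
    rw [hcard, hμ', hθ]
    -- RHS equals l * q^m'
    have hrhs : q ^ (m' + 1) - (q - 1 - l + 1) * q ^ m' = l * q ^ m' := by
      have h1 : q - 1 - l + 1 = q - l := by omega
      rw [h1]
      have h2 : q ^ (m' + 1) = q * q ^ m' := by ring
      rw [h2, ← Nat.sub_mul]
      congr 1
      omega
    rw [hrhs]
    exact hZ
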